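/- Let S and A be finite nonempty sets, f : S × A → ℝ, λ(s'|s,a) ≥ 0 for s' ≠ s with total rate Λ(s,a) := ∑_{s'≠s} λ(s'|s,a), and γ > 0. Let (Δ_n) be a sequence of positive reals with Δ_n → 0 and Δ_n·Λ(s,a) ≤ 1 for all (s,a) and n, and suppose V_n : S → ℝ satisfies the discrete-time Bellman equation with increment Δ_n, i.e. V_n(s) = max_{a∈A} ( Δ_n·f(s,a) + e^{−γΔ_n}·∑_{s'∈S} p_{Δ_n}(s'|s,a)·V_n(s') ) for all s, and that V_n(s) → V*(s) for every s ∈ S. Then V* satisfies the continuous-time optimality equation γ·V*(s) = max_{a∈A} ( f(s,a) + ∑_{s'≠s} λ(s'|s,a)·V*(s') − Λ(s,a)·V*(s) ) for all s ∈ S. -/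

import Mathlib

/-- If `V_n` solves the discrete-time Bellman equation with increment `Δ_n`
(with discretized transition probabilities `p_Δ(s'|s,a) = Δ·λ(s'|s,a)` for
`s' ≠ s` and `p_Δ(s|s,a) = 1 − Δ·Λ(s,a)`), `Δ_n → 0`, and `V_n → V*`
pointwise, then `V*` satisfies the continuous-time dynamic programming
optimality equation
`γ·V*(s) = max_{a∈A} ( f(s,a) + ∑_{s'≠s} λ(s'|s,a)·V*(s') − Λ(s,a)·V*(s) )`. -/
theorem discrete_bellman_limit_satisfies_continuous_equation
    {S A : Type*} [Fintype S] [Nonempty S] [DecidableEq S]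
    [Fintype A] [Nonempty A]
    (f : S → A → ℝ) (lam : S → S → A → ℝ)
    (hlam : ∀ s' s a, s' ≠ s → 0 ≤ lam s' s a)
    (γ : ℝ) (hγ : 0 < γ)
    (Δ : ℕ → ℝ) (hΔpos : ∀ n, 0 < Δ n)
    (hΔ0 : Filter.Tendsto Δ Filter.atTop (nhds 0))
    (hΔlam : ∀ n s a,
      Δ n * (∑ s' ∈ Finset.univ.erase s, lam s' s a) ≤ 1)
    (V : ℕ → S → ℝ) (Vstar : S → ℝ)
    (hBellman : ∀ n, ∀ s : S, V n s =
      Finset.univ.sup' Finset.univ_nonempty (fun a : A =>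
        Δ n * f s a + Real.exp (-(γ * Δ n)) *
          ((1 - Δ n * ∑ s' ∈ Finset.univ.erase s, lam s' s a) * V n s +
            ∑ s' ∈ Finset.univ.erase s, Δ n * lam s' s a * V n s')))
    (hconv : ∀ s : S,
      Filter.Tendsto (fun n => V n s) Filter.atTop (nhds (Vstar s))) :
    ∀ s : S, γ * Vstar s =
      Finset.univ.sup' Finset.univ_nonempty (fun a : A =>
        f s a + (∑ s' ∈ Finset.univ.erase s, lam s' s a * Vstar s')
          - (∑ s' ∈ Finset.univ.erase s, lam s' s a) * Vstar s) := by
  intro s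
  set g : ℕ → A → ℝ := fun n a =>
    f s a + Real.exp (-(γ * Δ n)) *
      ((∑ s' ∈ Finset.univ.erase s, lam s' s a * V n s')
        - (∑ s' ∈ Finset.univ.erase s, lam s' s a) * V n s) with hg
  have key : ∀ n, (1 - Real.exp (-(γ * Δ n))) / Δ n * V n s =
      Finset.univ.sup' Finset.univ_nonempty (g n) := by
    intro n
    have hΔn := hΔpos n
    have h1 : ∀ a : A,
        Δ n * f s a + Real.exp (-(γ * Δ n)) *
          ((1 - Δ n * ∑ s' ∈ Finset.univ.erase s, lam s' s a) * V n s +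
            ∑ s' ∈ Finset.univ.erase s, Δ n * lam s' s a * V n s')
        = Real.exp (-(γ * Δ n)) * V n s + Δ n * g n a := by
      intro a
      have hsum : ∑ s' ∈ Finset.univ.erase s, Δ n * lam s' s a * V n s'
          = Δ n * ∑ s' ∈ Finset.univ.erase s, lam s' s a * V n s' := by
        rw [Finset.mul_sum]
        exact Finset.sum_congr rfl fun s' _ => by ring
      simp only [hg]
      rw [hsum]
      ring
    have h2 : V n s = Finset.univ.sup' Finset.univ_nonempty
        (fun a : A => Real.exp (-(γ * Δ n)) * V n s + Δ n * g n a) :=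
      (hBellman n s).trans (Finset.sup'_congr _ rfl fun a _ => h1 a)
    have h3 : Real.exp (-(γ * Δ n)) * V n s +
          Δ n * Finset.univ.sup' Finset.univ_nonempty (g n)
        = Finset.univ.sup' Finset.univ_nonempty
          (fun a : A => Real.exp (-(γ * Δ n)) * V n s + Δ n * g n a) := by
      rw [Finset.mul₀_sup' hΔn.le (g n) Finset.univ Finset.univ_nonempty,
        Finset.add_sup']
    have h2' : V n s = Real.exp (-(γ * Δ n)) * V n s +
        Δ n * Finset.univ.sup' Finset.univ_nonempty (g n) := h2.trans h3.symm
    rw [div_mul_eq_mul_div, div_eq_iff hΔn.ne']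
    linear_combination h2'
  have hgconv : ∀ a : A, Filter.Tendsto (fun n => g n a) Filter.atTop
      (nhds (f s a + (∑ s' ∈ Finset.univ.erase s, lam s' s a * Vstar s')
          - (∑ s' ∈ Finset.univ.erase s, lam s' s a) * Vstar s)) := by
    intro a
    have he : Filter.Tendsto (fun n => Real.exp (-(γ * Δ n))) Filter.atTop
        (nhds 1) := by
      have h0 : Filter.Tendsto (fun n => -(γ * Δ n)) Filter.atTop (nhds 0) := by
        have := (hΔ0.const_mul γ).neg
        simpa using this
      simpa [Function.comp_def] using (Real.continuous_exp.tendsto 0).comp h0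
    have hsum : Filter.Tendsto
        (fun n => ∑ s' ∈ Finset.univ.erase s, lam s' s a * V n s')
        Filter.atTop (nhds (∑ s' ∈ Finset.univ.erase s, lam s' s a * Vstar s')) :=
      tendsto_finset_sum _ (fun s' _ => (hconv s').const_mul _)
    have hbig := Filter.Tendsto.add (tendsto_const_nhds (x := f s a))
      (he.mul (hsum.sub ((hconv s).const_mul
        (∑ s' ∈ Finset.univ.erase s, lam s' s a))))
    simpa [hg, add_sub_assoc, one_mul] using hbig
  have hsupconv : Filter.Tendsto
      (fun n => Finset.univ.sup' Finset.univ_nonempty (g n)) Filter.atTop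
      (nhds (Finset.univ.sup' Finset.univ_nonempty (fun a : A =>
        f s a + (∑ s' ∈ Finset.univ.erase s, lam s' s a * Vstar s')
          - (∑ s' ∈ Finset.univ.erase s, lam s' s a) * Vstar s))) :=
    Filter.Tendsto.finset_sup'_nhds_apply _ (fun a _ => hgconv a)
  have hquot : Filter.Tendsto (fun n => (1 - Real.exp (-(γ * Δ n))) / Δ n)
      Filter.atTop (nhds γ) := by
    have hd : HasDerivAt (fun x : ℝ => 1 - Real.exp (-(γ * x))) γ 0 := by
      have h1 : HasDerivAt (fun x : ℝ => -(γ * x)) (-γ) 0 := by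
        have := ((hasDerivAt_id (0:ℝ)).const_mul γ).neg
        simpa [Pi.neg_def] using this
      have h2 := (Real.hasDerivAt_exp (-(γ * 0))).comp 0 h1
      have h3 := (hasDerivAt_const (0:ℝ) (1:ℝ)).sub h2
      simpa [Function.comp_def, Pi.sub_def] using h3
    have hslope := hasDerivAt_iff_tendsto_slope.mp hd
    have hΔne : Filter.Tendsto Δ Filter.atTop (nhdsWithin 0 {(0:ℝ)}ᶜ) := by
      rw [tendsto_nhdsWithin_iff]
      exact ⟨hΔ0, Filter.Eventually.of_forall fun n => (hΔpos n).ne'⟩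
    have heq : ∀ n, slope (fun x : ℝ => 1 - Real.exp (-(γ * x))) 0 (Δ n)
        = (1 - Real.exp (-(γ * Δ n))) / Δ n := by
      intro n
      simp [slope_def_field, Real.exp_zero, mul_zero, neg_zero, sub_zero]
    exact (hslope.comp hΔne).congr heq
  have hlhs : Filter.Tendsto
      (fun n => (1 - Real.exp (-(γ * Δ n))) / Δ n * V n s) Filter.atTop
      (nhds (γ * Vstar s)) := hquot.mul (hconv s)
  have hrhs : Filter.Tendsto
      (fun n => (1 - Real.exp (-(γ * Δ n))) / Δ n * V n s) Filter.atTop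
      (nhds (Finset.univ.sup' Finset.univ_nonempty (fun a : A =>
        f s a + (∑ s' ∈ Finset.univ.erase s, lam s' s a * Vstar s')
          - (∑ s' ∈ Finset.univ.erase s, lam s' s a) * Vstar s))) := by
    simpa only [key] using hsupconv
  exact tendsto_nhds_unique hlhs hrhs
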